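/- Fix integers K, N, a, b with m = a*N − b*K > 0, and let 𝓛 be a (K,N)-periodic lattice path with 𝓛 < 𝓛[a,b]. Let DPT(𝓛) = {σ ∈ DPT(K,N,a,b) : 𝓛(σ) = 𝓛}. Then the restriction map σ ↦ σ|_{Δ(𝓛)} is a bijection from DPT(𝓛) onto the set of standard fillings τ of Δ(𝓛) by 1,…,m whose (K,N)-periodic extension to Δ'(𝓛) is standard. -/

import Mathlib

/-- A standard doubly periodic tableau with respect to `(K, N, a, b)`. -/
def IsDPT (K N a b : ℤ) (σ : ℤ × ℤ → ℤ) : Prop :=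
  Function.Surjective σ ∧
  (∀ x y : ℤ, σ (x + K, y - N) = σ (x, y)) ∧
  (∀ x y : ℤ, σ (x + a, y - b) = σ (x, y) + (a * N - b * K)) ∧
  (∀ x y : ℤ, σ (x, y) < σ (x + 1, y)) ∧
  (∀ x y : ℤ, σ (x, y) < σ (x, y + 1))

/-- A `(K,N)`-periodic lattice path. -/
def IsLP (K N : ℤ) (L : ℤ → ℤ) : Prop :=
  Antitone L ∧ ∀ y : ℤ, L (y + N) = L y - K

/-- The shifted path `L[a,b] : y ↦ L(y+b) + a`. -/
def LPshift (a b : ℤ) (L : ℤ → ℤ) : ℤ → ℤ := fun y => L (y + b) + a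

/-- The extended fundamental domain `Δ'(L)`. -/
def DeltaP (a b : ℤ) (L : ℤ → ℤ) : Set (ℤ × ℤ) :=
  {p : ℤ × ℤ | L p.2 ≤ p.1 ∧ p.1 < LPshift a b L p.2}

/-- The fundamental domain `Δ(L) = {(x,y) ∈ Δ'(L) : 0 ≤ y < N}`. -/
def Delta (N a b : ℤ) (L : ℤ → ℤ) : Set (ℤ × ℤ) :=
  {p : ℤ × ℤ | p ∈ DeltaP a b L ∧ 0 ≤ p.2 ∧ p.2 < N}

/-- A standard filling of `Δ(L)` by the numbers `1, …, m`. -/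
def IsStdFilling (K N a b : ℤ) (L : ℤ → ℤ) (τ : ℤ × ℤ → ℤ) : Prop :=
  Set.BijOn τ (Delta N a b L) (Set.Icc 1 (a * N - b * K)) ∧
  (∀ x y : ℤ, (x, y) ∈ Delta N a b L → (x + 1, y) ∈ Delta N a b L →
    τ (x, y) < τ (x + 1, y)) ∧
  (∀ x y : ℤ, (x, y) ∈ Delta N a b L → (x, y + 1) ∈ Delta N a b L →
    τ (x, y) < τ (x, y + 1))

/-- Standardness of the `(K,N)`-periodic extension of a filling of `Δ` to `Δ'`. -/
def ExtStandard (K N : ℤ) (Δ : Set (ℤ × ℤ)) (τ : ℤ × ℤ → ℤ) : Prop :=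
  ∀ x y x' y' s s' : ℤ, (x, y) ∈ Δ → (x', y') ∈ Δ →
    ((x + s * K + 1 = x' + s' * K ∧ y - s * N = y' - s' * N) → τ (x, y) < τ (x', y')) ∧
    ((x + s * K = x' + s' * K ∧ y - s * N + 1 = y' - s' * N) → τ (x, y) < τ (x', y'))





lemma aux_step {f : ℤ → ℤ} {k : ℤ} (h : ∀ c, f (c + 1) = f c + k) (c : ℤ) :
    f c = f 0 + c * k := by
  induction c using Int.induction_on with
  | zero => simp
  | succ n ih => rw [h, ih]; ring
  | pred n ih =>
    have := h (-(n : ℤ) - 1)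
    rw [sub_add_cancel] at this
    rw [ih] at this
    have : f (-(n:ℤ) - 1) = f 0 + (-(n:ℤ) - 1) * k := by linarith
    simpa [sub_eq_add_neg, add_comm] using this

lemma aux_iter {σ : ℤ × ℤ → ℤ} {u v c : ℤ} (h : ∀ x y, σ (x + u, y - v) = σ (x, y) + c)
    (s x y : ℤ) : σ (x + s * u, y - s * v) = σ (x, y) + s * c := by
  have := aux_step (f := fun s => σ (x + s * u, y - s * v)) (k := c) ?_ s
  · simpa using this
  · intro d
    show σ (x + (d + 1) * u, y - (d + 1) * v) = σ (x + d * u, y - d * v) + c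
    have h1 : x + (d + 1) * u = (x + d * u) + u := by ring
    have h2 : y - (d + 1) * v = (y - d * v) - v := by ring
    rw [h1, h2, h]

lemma aux_Literate {L : ℤ → ℤ} {K N : ℤ} (h : ∀ y, L (y + N) = L y - K) (c y : ℤ) :
    L (y + c * N) = L y - c * K := by
  have := aux_step (f := fun c => L (y + c * N)) (k := -K) ?_ c
  · simpa [sub_eq_add_neg] using this
  · intro d
    show L (y + (d + 1) * N) = L (y + d * N) + -K
    have h1 : y + (d + 1) * N = (y + d * N) + N := by ring
    rw [h1, h]; ring

lemma aux_deltaP_shift {K N a b : ℤ} {L : ℤ → ℤ} (h2 : ∀ y, L (y + N) = L y - K)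
    (s u z : ℤ) (h : (u, z) ∈ DeltaP a b L) : (u + s * K, z - s * N) ∈ DeltaP a b L := by
  simp only [DeltaP, LPshift, Set.mem_setOf_eq] at h ⊢
  obtain ⟨h3, h4⟩ := h
  have e1 : L (z - s * N) = L z + s * K := by
    have := aux_Literate h2 (-s) z
    have e : z + -s * N = z - s * N := by ring
    rw [e] at this; linarith
  have e2 : L (z - s * N + b) = L (z + b) + s * K := by
    have := aux_Literate h2 (-s) (z + b)
    have e : z + b + -s * N = z - s * N + b := by ring
    rw [e] at this; linarith
  constructor
  · linarith
  · linarith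

lemma aux_window {K N a b : ℤ} {L : ℤ → ℤ} (hm : 0 < a * N - b * K)
    (hmono : Antitone L) (h2 : ∀ y, L (y + N) = L y - K)
    (hle : ∀ y, L y ≤ L (y + b) + a) (x y : ℤ) :
    ∃! t : ℤ, (x - t * a, y + t * b) ∈ DeltaP a b L := by
  set m := a * N - b * K with hmdef
  set S : ℤ → ℤ := fun t => L (y + t * b) + t * a with hS
  have hmem : ∀ t : ℤ, (x - t * a, y + t * b) ∈ DeltaP a b L ↔ S t ≤ x ∧ x < S (t + 1) := by
    intro t
    simp only [DeltaP, LPshift, Set.mem_setOf_eq, hS]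
    constructor
    · rintro ⟨h3, h4⟩
      have e : y + t * b + b = y + (t + 1) * b := by ring
      rw [e] at h4
      constructor <;> linarith
    · rintro ⟨h3, h4⟩
      have e : y + t * b + b = y + (t + 1) * b := by ring
      rw [e]
      constructor <;> linarith
  have hstep : ∀ t : ℤ, S t ≤ S (t + 1) := by
    intro t
    have := hle (y + t * b)
    simp only [hS]
    have e : y + t * b + b = y + (t + 1) * b := by ring
    rw [e] at this
    linarith
  have hSmono : Monotone S := monotone_int_of_le_succ hstep
  have hper : ∀ k t : ℤ, S (t + k * N) = S t + k * m := by
    intro k t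
    have := aux_Literate h2 (k * b) (y + t * b)
    have e : y + t * b + k * b * N = y + (t + k * N) * b := by ring
    rw [e] at this
    simp only [hS]
    rw [this, hmdef]
    ring
  -- the set {t | S t ≤ x} is nonempty and bounded above
  have hinh : ∃ t : ℤ, S t ≤ x := by
    refine ⟨(-(max 0 (S 0 - x))) * N, ?_⟩
    have := hper (-(max 0 (S 0 - x))) 0
    rw [zero_add] at this
    rw [this]
    have h1 : 0 ≤ max 0 (S 0 - x) := le_max_left _ _
    have h2' : S 0 - x ≤ max 0 (S 0 - x) := le_max_right _ _
    nlinarith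
  have hbdd : ∃ B : ℤ, ∀ t : ℤ, S t ≤ x → t ≤ B := by
    refine ⟨(max 0 (x - S 0) + 1) * N, ?_⟩
    intro t ht
    by_contra hc
    push_neg at hc
    have h1 : S ((max 0 (x - S 0) + 1) * N) ≤ S t := hSmono hc.le
    have h2' := hper (max 0 (x - S 0) + 1) 0
    rw [zero_add] at h2'
    have h3 : 0 ≤ max 0 (x - S 0) := le_max_left _ _
    have h4 : x - S 0 ≤ max 0 (x - S 0) := le_max_right _ _
    nlinarith
  obtain ⟨t0, ht0, ht0max⟩ := Int.exists_greatest_of_bdd hbdd hinh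
  have hup : x < S (t0 + 1) := by
    by_contra hc
    push_neg at hc
    have := ht0max (t0 + 1) hc
    omega
  refine ⟨t0, (hmem t0).2 ⟨ht0, hup⟩, ?_⟩
  intro t ht
  rw [hmem t] at ht
  have h1 : t ≤ t0 := ht0max t ht.1
  by_contra hc
  have h2' : t + 1 ≤ t0 := by omega
  have := hSmono h2'
  have := ht.2
  omega

lemma aux_sum {L : ℤ → ℤ} (n : ℕ) (k : ℤ) (hper : ∀ z : ℤ, L (z + n) = L z + k) (c : ℤ) :
    ∑ i ∈ Finset.range n, L ((i : ℤ) + c) = (∑ i ∈ Finset.range n, L (i : ℤ)) + c * k := by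
  have := aux_step (f := fun c => ∑ i ∈ Finset.range n, L ((i : ℤ) + c)) (k := k) ?_ c
  · simpa using this
  · intro d
    show (∑ i ∈ Finset.range n, L ((i : ℤ) + (d + 1)))
        = (∑ i ∈ Finset.range n, L ((i : ℤ) + d)) + k
    have e1 : ∀ i : ℕ, L ((i : ℤ) + (d + 1)) = L (((i + 1 : ℕ) : ℤ) + d) := by
      intro i; congr 1; push_cast; ring
    rw [Finset.sum_congr rfl (fun i _ => e1 i)]
    have e2 : (∑ i ∈ Finset.range n, L (((i + 1 : ℕ) : ℤ) + d))
        = (∑ i ∈ Finset.range (n + 1), L ((i : ℤ) + d)) - L ((0 : ℕ) + d) := by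
      rw [Finset.sum_range_succ']
      ring
    rw [e2, Finset.sum_range_succ]
    have := hper d
    push_cast
    rw [show (n : ℤ) + d = d + n by ring, this]
    ring_nf
    rw [add_comm k]; congr 1; exact Finset.sum_congr rfl (fun i _ => by rw [add_comm])


lemma aux_Npos {K N a b : ℤ} {L : ℤ → ℤ} (hm : 0 < a * N - b * K)
    (hL : IsLP K N L) (hle : ∀ y, L y ≤ L (y + b) + a) : 0 < N := by
  rcases lt_trichotomy N 0 with hN | hN | hN
  · exfalso
    set n : ℕ := (-N).toNat with hn
    have hnN : (n : ℤ) = -N := by omega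
    have hper : ∀ z : ℤ, L (z + n) = L z + K := by
      intro z
      have := hL.2 (z + n)
      rw [show z + (n : ℤ) + N = z by omega] at this
      omega
    have hsum := aux_sum n K hper b
    have hnn : 0 ≤ ∑ i ∈ Finset.range n, (L ((i : ℤ) + b) + a - L (i : ℤ)) := by
      apply Finset.sum_nonneg
      intro i _
      have := hle (i : ℤ)
      rw [show (i : ℤ) + b = (i : ℤ) + b by ring] at this
      linarith
    have hsplit : ∑ i ∈ Finset.range n, (L ((i : ℤ) + b) + a - L (i : ℤ))
        = (∑ i ∈ Finset.range n, L ((i : ℤ) + b)) + n * a - ∑ i ∈ Finset.range n, L (i : ℤ) := by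
      rw [Finset.sum_sub_distrib, Finset.sum_add_distrib]
      simp [mul_comm]
    rw [hsplit, hsum] at hnn
    have : (n : ℤ) * a = -N * a := by rw [hnN]
    nlinarith
  · subst hN
    have := hL.2 0
    simp only [add_zero] at this
    have hK : K = 0 := by omega
    rw [hK] at hm
    simp at hm
  · exact hN

lemma aux_card {K N a b : ℤ} {L : ℤ → ℤ} (hm : 0 < a * N - b * K)
    (hL : IsLP K N L) (hle : ∀ y, L y ≤ L (y + b) + a) :
    ∃ D : Finset (ℤ × ℤ), ↑D = Delta N a b L ∧ (D.card : ℤ) = a * N - b * K := by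
  have hN : 0 < N := aux_Npos hm hL hle
  set n : ℕ := N.toNat with hn
  have hnN : (n : ℤ) = N := by omega
  classical
  set D : Finset (ℤ × ℤ) := (Finset.range n).biUnion
    (fun i => (Finset.Ico (L (i : ℤ)) (L ((i : ℤ) + b) + a)).image (fun x => (x, (i : ℤ))))
    with hD
  refine ⟨D, ?_, ?_⟩
  · ext ⟨x, y⟩
    simp only [hD, Finset.coe_biUnion, Finset.mem_coe, Finset.mem_biUnion, Finset.mem_range,
      Finset.mem_image, Finset.mem_Ico, Set.mem_iUnion, Delta, DeltaP, LPshift,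
      Set.mem_setOf_eq, Prod.mk.injEq]
    constructor
    · rintro ⟨i, hi, x', ⟨hx1, hx2⟩, rfl, rfl⟩
      refine ⟨⟨hx1, hx2⟩, by positivity, by omega⟩
    · rintro ⟨⟨hx1, hx2⟩, hy1, hy2⟩
      refine ⟨y.toNat, by omega, x, ?_, rfl, by omega⟩
      rw [show ((y.toNat : ℤ)) = y by omega]
      exact ⟨hx1, hx2⟩
  · have hdisj : ∀ i ∈ Finset.range n, ∀ j ∈ Finset.range n, i ≠ j →
        Disjoint ((Finset.Ico (L (i : ℤ)) (L ((i : ℤ) + b) + a)).image (fun x => (x, (i : ℤ))))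
          ((Finset.Ico (L (j : ℤ)) (L ((j : ℤ) + b) + a)).image (fun x => (x, (j : ℤ)))) := by
      intro i _ j _ hij
      rw [Finset.disjoint_left]
      rintro ⟨x, y⟩ h1 h2
      simp only [Finset.mem_image, Prod.mk.injEq] at h1 h2
      obtain ⟨x1, _, _, e1⟩ := h1
      obtain ⟨x2, _, _, e2⟩ := h2
      apply hij
      omega
    rw [hD, Finset.card_biUnion hdisj]
    have hcard : ∀ i : ℕ,
        (((Finset.Ico (L (i : ℤ)) (L ((i : ℤ) + b) + a)).image (fun x => (x, (i : ℤ)))).card : ℤ)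
          = L ((i : ℤ) + b) + a - L (i : ℤ) := by
      intro i
      rw [Finset.card_image_of_injective _ (fun x1 x2 h => (Prod.mk.injEq _ _ _ _).mp h |>.1),
        Int.card_Ico]
      have := hle (i : ℤ)
      omega
    push_cast
    rw [Finset.sum_congr rfl (fun i _ => hcard i)]
    have hper : ∀ z : ℤ, L (z + n) = L z + (-K) := by
      intro z
      have := hL.2 z
      rw [hnN]
      omega
    have hsum := aux_sum n (-K) hper b
    have hsplit : ∑ i ∈ Finset.range n, (L ((i : ℤ) + b) + a - L (i : ℤ))
        = (∑ i ∈ Finset.range n, L ((i : ℤ) + b)) + n * a - ∑ i ∈ Finset.range n, L (i : ℤ) := by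
      rw [Finset.sum_sub_distrib, Finset.sum_add_distrib]
      simp [mul_comm]
    rw [hsplit, hsum, hnN]
    ring

def dptRed (K N : ℤ) (p : ℤ × ℤ) : ℤ × ℤ := (p.1 + p.2 / N * K, p.2 % N)

lemma dptRed_mem {K N a b : ℤ} {L : ℤ → ℤ} (hN : 0 < N) (h2 : ∀ y, L (y + N) = L y - K)
    {p : ℤ × ℤ} (hp : p ∈ DeltaP a b L) : dptRed K N p ∈ Delta N a b L := by
  obtain ⟨u, z⟩ := p
  refine ⟨?_, ?_, ?_⟩
  · have := aux_deltaP_shift h2 (z / N) u z hp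
    have e : z - z / N * N = z % N := by rw [Int.emod_def]; ring
    rw [e] at this
    exact this
  · exact Int.emod_nonneg z (ne_of_gt hN)
  · exact Int.emod_lt_of_pos z hN

lemma dptRed_eq {K N : ℤ} (hN : 0 < N) {p : ℤ × ℤ} (h0 : 0 ≤ p.2) (h1 : p.2 < N) :
    dptRed K N p = p := by
  obtain ⟨u, z⟩ := p
  simp only [dptRed]
  rw [Int.ediv_eq_zero_of_lt h0 h1, Int.emod_eq_of_lt h0 h1]
  simp

lemma dptRed_shift {K N : ℤ} (hN : 0 < N) (s u z : ℤ) :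
    dptRed K N (u + s * K, z - s * N) = dptRed K N (u, z) := by
  simp only [dptRed]
  have e : z - s * N = z + (-s) * N := by ring
  rw [e, Int.add_mul_ediv_right z (-s) (ne_of_gt hN), Int.add_mul_emod_self_right]
  have : u + s * K + (z / N + -s) * K = u + z / N * K := by ring
  rw [this]

lemma dptRed_coords {K N : ℤ} (u z : ℤ) :
    (dptRed K N (u, z)).1 = u + z / N * K ∧ (dptRed K N (u, z)).2 = z - z / N * N := by
  constructor
  · rfl
  · simp only [dptRed]
    rw [Int.emod_def]
    ring




open Classical in
noncomputable def restrDelta (N a b : ℤ) (L : ℤ → ℤ) (σ : ℤ × ℤ → ℤ) : ℤ × ℤ → ℤ :=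
  fun p => if p ∈ Delta N a b L then σ p else 0

lemma restrDelta_eq {N a b : ℤ} {L : ℤ → ℤ} {σ : ℤ × ℤ → ℤ} {p : ℤ × ℤ}
    (h : p ∈ Delta N a b L) : restrDelta N a b L σ p = σ p := by
  simp [restrDelta, h]

lemma restrDelta_zero {N a b : ℤ} {L : ℤ → ℤ} {σ : ℤ × ℤ → ℤ} {p : ℤ × ℤ}
    (h : p ∉ Delta N a b L) : restrDelta N a b L σ p = 0 := by
  simp [restrDelta, h]

lemma aux_per1_iter {K N a b : ℤ} {σ : ℤ × ℤ → ℤ} (hσ : IsDPT K N a b σ) (s x y : ℤ) :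
    σ (x + s * K, y - s * N) = σ (x, y) := by
  have := aux_iter (σ := σ) (u := K) (v := N) (c := 0)
    (fun x y => by rw [hσ.2.1 x y]; ring) s x y
  simpa using this

lemma aux_per2_iter {K N a b : ℤ} {σ : ℤ × ℤ → ℤ} (hσ : IsDPT K N a b σ) (s x y : ℤ) :
    σ (x + s * a, y - s * b) = σ (x, y) + s * (a * N - b * K) :=
  aux_iter (u := a) (v := b) (c := a * N - b * K) hσ.2.2.1 s x y

lemma aux_window_char {K N a b : ℤ} {L : ℤ → ℤ} {σ : ℤ × ℤ → ℤ}
    (hσ : IsDPT K N a b σ) (hleast : ∀ y : ℤ, IsLeast {x : ℤ | 1 ≤ σ (x, y)} (L y))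
    (x y : ℤ) : (x, y) ∈ DeltaP a b L ↔ 1 ≤ σ (x, y) ∧ σ (x, y) ≤ a * N - b * K := by
  have hmono : ∀ y : ℤ, Monotone (fun x => σ (x, y)) := fun y =>
    (strictMono_int_of_lt_succ (fun x => hσ.2.2.2.1 x y)).monotone
  have hup : ∀ x y : ℤ, x < L y → σ (x, y) ≤ 0 := by
    intro x y hx
    by_contra hc
    push_neg at hc
    have := (hleast y).2 (by exact hc : x ∈ {x : ℤ | 1 ≤ σ (x, y)})
    omega
  have hper2 : σ (x, y) = σ (x - a, y + b) + (a * N - b * K) := by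
    have := hσ.2.2.1 (x - a) (y + b)
    rw [show x - a + a = x by ring, show y + b - b = y by ring] at this
    rw [this]
  constructor
  · rintro ⟨h1, h2⟩
    simp only [LPshift] at h2
    constructor
    · have := hmono y (by exact h1 : L y ≤ x)
      have h0 := (hleast y).1
      simp only [Set.mem_setOf_eq] at h0 this
      omega
    · have : x - a < L (y + b) := by omega
      have := hup (x - a) (y + b) this
      omega
  · rintro ⟨h1, h2⟩
    constructor
    · exact (hleast y).2 (by exact h1 : x ∈ {x : ℤ | 1 ≤ σ (x, y)})
    · simp only [LPshift]
      by_contra hc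
      push_neg at hc
      have : L (y + b) ≤ x - a := by omega
      have := hmono (y + b) this
      have h0 := (hleast (y + b)).1
      simp only [Set.mem_setOf_eq] at h0 this
      omega

lemma aux_forward {K N a b : ℤ} {L : ℤ → ℤ} {σ : ℤ × ℤ → ℤ} (hm : 0 < a * N - b * K)
    (hL : IsLP K N L) (hle : ∀ y, L y ≤ L (y + b) + a)
    (hσ : IsDPT K N a b σ) (hleast : ∀ y : ℤ, IsLeast {x : ℤ | 1 ≤ σ (x, y)} (L y)) :
    IsStdFilling K N a b L (restrDelta N a b L σ) ∧
    ExtStandard K N (Delta N a b L) (restrDelta N a b L σ) ∧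
    ∀ p : ℤ × ℤ, p ∉ Delta N a b L → restrDelta N a b L σ p = 0 := by
  classical
  have hN : 0 < N := aux_Npos hm hL hle
  set m := a * N - b * K with hmdef
  set τ := restrDelta N a b L σ with hτ
  have hmapsTo : Set.MapsTo τ (Delta N a b L) (Set.Icc 1 m) := by
    intro p hp
    rw [hτ, restrDelta_eq hp]
    obtain ⟨u, z⟩ := p
    exact (aux_window_char hσ hleast u z).1 hp.1
  have hsurjOn : Set.SurjOn τ (Delta N a b L) (Set.Icc 1 m) := by
    intro v hv
    obtain ⟨⟨u, z⟩, huz⟩ := hσ.1 v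
    have hmem : (u, z) ∈ DeltaP a b L := by
      rw [aux_window_char hσ hleast u z, huz]
      exact hv
    have hq := dptRed_mem hN hL.2 hmem
    refine ⟨dptRed K N (u, z), hq, ?_⟩
    rw [hτ, restrDelta_eq hq]
    have := aux_per1_iter hσ (z / N) u z
    have e : z - z / N * N = z % N := by rw [Int.emod_def]; ring
    rw [e] at this
    simpa [dptRed] using this.trans huz
  obtain ⟨D, hDcoe, hDcard⟩ := aux_card hm hL hle
  have hinjOn : Set.InjOn τ (Delta N a b L) := by
    rw [← hDcoe]
    apply Finset.injOn_of_card_image_eq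
    have himg : D.image τ = Finset.Icc 1 m := by
      ext v
      simp only [Finset.mem_image, Finset.mem_Icc]
      constructor
      · rintro ⟨p, hp, rfl⟩
        have : p ∈ Delta N a b L := by rw [← hDcoe]; exact hp
        have := hmapsTo this
        simpa using this
      · intro hv
        obtain ⟨p, hp, he⟩ := hsurjOn (by simpa using hv : v ∈ Set.Icc 1 m)
        refine ⟨p, by rw [← Finset.mem_coe, hDcoe]; exact hp, he⟩
    rw [himg, Int.card_Icc]
    omega
  refine ⟨⟨⟨hmapsTo, hinjOn, hsurjOn⟩, ?_, ?_⟩, ?_, ?_⟩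
  · intro x y h1 h2
    rw [hτ, restrDelta_eq h1, restrDelta_eq h2]
    exact hσ.2.2.2.1 x y
  · intro x y h1 h2
    rw [hτ, restrDelta_eq h1, restrDelta_eq h2]
    exact hσ.2.2.2.2 x y
  · intro x y x' y' s s' hp hp'
    rw [hτ, restrDelta_eq hp, restrDelta_eq hp']
    constructor
    · rintro ⟨e1, e2⟩
      have v1 := aux_per1_iter hσ s x y
      have v2 := aux_per1_iter hσ s' x' y'
      have v3 := hσ.2.2.2.1 (x + s * K) (y - s * N)
      have e3 : ((x + s * K + 1 : ℤ), y - s * N) = (x' + s' * K, y' - s' * N) := by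
        rw [e1, e2]
      rw [e3, v2] at v3
      omega
    · rintro ⟨e1, e2⟩
      have v1 := aux_per1_iter hσ s x y
      have v2 := aux_per1_iter hσ s' x' y'
      have v3 := hσ.2.2.2.2 (x + s * K) (y - s * N)
      have e3 : ((x + s * K : ℤ), y - s * N + 1) = (x' + s' * K, y' - s' * N) := by
        rw [e1, e2]
      rw [e3, v2] at v3
      omega
  · intro p hp
    exact restrDelta_zero hp

lemma aux_S_mono {a b : ℤ} {L : ℤ → ℤ} (hle : ∀ y, L y ≤ L (y + b) + a) (y : ℤ) :
    Monotone (fun t : ℤ => L (y + t * b) + t * a) := by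
  apply monotone_int_of_le_succ
  intro t
  have := hle (y + t * b)
  have e : y + t * b + b = y + (t + 1) * b := by ring
  rw [e] at this
  show L (y + t * b) + t * a ≤ L (y + (t + 1) * b) + (t + 1) * a
  linarith

lemma aux_memS {a b : ℤ} {L : ℤ → ℤ} (x y t : ℤ) :
    (x - t * a, y + t * b) ∈ DeltaP a b L ↔
      L (y + t * b) + t * a ≤ x ∧ x < L (y + (t + 1) * b) + (t + 1) * a := by
  simp only [DeltaP, LPshift, Set.mem_setOf_eq]
  have e : y + t * b + b = y + (t + 1) * b := by ring
  rw [e]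
  constructor <;> rintro ⟨h1, h2⟩ <;> constructor <;> linarith

lemma aux_backward {K N a b : ℤ} {L : ℤ → ℤ} {τ : ℤ × ℤ → ℤ} (hm : 0 < a * N - b * K)
    (hL : IsLP K N L) (hle : ∀ y, L y ≤ L (y + b) + a)
    (hτstd : IsStdFilling K N a b L τ) (hExt : ExtStandard K N (Delta N a b L) τ)
    (T : ℤ → ℤ → ℤ)
    (hT1 : ∀ x y : ℤ, (x - T x y * a, y + T x y * b) ∈ DeltaP a b L)
    (hT2 : ∀ x y t : ℤ, (x - t * a, y + t * b) ∈ DeltaP a b L → t = T x y) :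
    IsDPT K N a b (fun p => τ (dptRed K N (p.1 - T p.1 p.2 * a, p.2 + T p.1 p.2 * b))
        + T p.1 p.2 * (a * N - b * K)) ∧
    (∀ y : ℤ, IsLeast {x : ℤ | 1 ≤ τ (dptRed K N (x - T x y * a, y + T x y * b))
        + T x y * (a * N - b * K)} (L y)) ∧
    (∀ p ∈ Delta N a b L, τ (dptRed K N (p.1 - T p.1 p.2 * a, p.2 + T p.1 p.2 * b))
        + T p.1 p.2 * (a * N - b * K) = τ p) := by
  have hN : 0 < N := aux_Npos hm hL hle
  set m := a * N - b * K with hmdef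
  set E : ℤ × ℤ → ℤ := fun p => τ (dptRed K N (p.1 - T p.1 p.2 * a, p.2 + T p.1 p.2 * b))
      + T p.1 p.2 * m with hE
  have hEval : ∀ x y : ℤ, E (x, y)
      = τ (dptRed K N (x - T x y * a, y + T x y * b)) + T x y * m := fun x y => rfl
  have hτmem : ∀ p ∈ Delta N a b L, 1 ≤ τ p ∧ τ p ≤ m := by
    intro p hp
    have := hτstd.1.1 hp
    simpa using this
  have hTmem : ∀ x y : ℤ, dptRed K N (x - T x y * a, y + T x y * b) ∈ Delta N a b L :=
    fun x y => dptRed_mem hN hL.2 (hT1 x y)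
  have hTeq : ∀ x y t : ℤ, (x - t * a, y + t * b) ∈ DeltaP a b L → T x y = t :=
    fun x y t h => (hT2 x y t h).symm
  have hEbd : ∀ x y : ℤ, 1 + T x y * m ≤ E (x, y) ∧ E (x, y) ≤ m + T x y * m := by
    intro x y
    have := hτmem _ (hTmem x y)
    rw [hEval]
    omega
  -- per1
  have per1 : ∀ x y : ℤ, E (x + K, y - N) = E (x, y) := by
    intro x y
    have hp := hT1 x y
    have h1 : (x + K - T x y * a, y - N + T x y * b) ∈ DeltaP a b L := by
      have := aux_deltaP_shift hL.2 1 (x - T x y * a) (y + T x y * b) hp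
      have e1 : x - T x y * a + 1 * K = x + K - T x y * a := by ring
      have e2 : y + T x y * b - 1 * N = y - N + T x y * b := by ring
      rw [e1, e2] at this
      exact this
    have hTT : T (x + K) (y - N) = T x y := hTeq _ _ _ h1
    rw [hEval, hEval, hTT]
    have e3 : (x + K - T x y * a, y - N + T x y * b)
        = ((x - T x y * a) + 1 * K, (y + T x y * b) - 1 * N) := by
      rw [Prod.mk.injEq]; exact ⟨by ring, by ring⟩
    rw [e3, dptRed_shift hN]
  -- per2
  have per2 : ∀ x y : ℤ, E (x + a, y - b) = E (x, y) + m := by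
    intro x y
    have hp := hT1 x y
    have h1 : (x + a - (T x y + 1) * a, y - b + (T x y + 1) * b) ∈ DeltaP a b L := by
      have e1 : x + a - (T x y + 1) * a = x - T x y * a := by ring
      have e2 : y - b + (T x y + 1) * b = y + T x y * b := by ring
      rw [e1, e2]
      exact hp
    have hTT : T (x + a) (y - b) = T x y + 1 := hTeq _ _ _ h1
    rw [hEval, hEval, hTT]
    have e3 : (x + a - (T x y + 1) * a, y - b + (T x y + 1) * b)
        = (x - T x y * a, y + T x y * b) := by
      rw [Prod.mk.injEq]; exact ⟨by ring, by ring⟩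
    rw [e3]
    ring
  -- E = τ on Delta
  have hEdelta : ∀ p ∈ Delta N a b L, E p = τ p := by
    rintro ⟨x, y⟩ hp
    have h1 : (x - 0 * a, y + 0 * b) ∈ DeltaP a b L := by
      have e : ((x - 0 * a : ℤ), (y + 0 * b : ℤ)) = (x, y) := by
        rw [Prod.mk.injEq]; exact ⟨by ring, by ring⟩
      rw [e]
      exact hp.1
    have hTT : T x y = 0 := hTeq _ _ _ h1
    rw [hEval, hTT]
    have e : ((x - 0 * a : ℤ), (y + 0 * b : ℤ)) = (x, y) := by
      rw [Prod.mk.injEq]; exact ⟨by ring, by ring⟩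
    rw [e, dptRed_eq hN hp.2.1 hp.2.2]
    ring
  -- strict increase in x
  have hx : ∀ x y : ℤ, E (x, y) < E (x + 1, y) := by
    intro x y
    set t := T x y with ht
    set t' := T (x + 1) y with ht'
    have hp := (aux_memS x y t).1 (hT1 x y)
    have hq := (aux_memS (x + 1) y t').1 (hT1 (x + 1) y)
    have hSm := aux_S_mono hle y
    have htt' : t ≤ t' := by
      by_contra hc
      push_neg at hc
      have h1 : t' + 1 ≤ t := by omega
      have h2 := hSm h1
      dsimp only at h2
      omega
    rcases eq_or_lt_of_le htt' with heq | hlt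
    · -- same window: adjacency via ExtStandard
      rw [hEval, hEval, ← ht, ← ht', ← heq]
      have hP := hTmem x y
      have hQ : dptRed K N (x + 1 - t * a, y + t * b) ∈ Delta N a b L := by
        have := hTmem (x + 1) y
        rw [← ht', ← heq] at this
        exact this
      rw [← ht] at hP
      set u := x - t * a with hu
      set z := y + t * b with hz
      have e1 : x + 1 - t * a = u + 1 := by rw [hu]; ring
      rw [e1] at hQ ⊢
      have hcoP := dptRed_coords (K := K) (N := N) u z
      have hcoQ := dptRed_coords (K := K) (N := N) (u + 1) z
      have happ := hExt (dptRed K N (u, z)).1 (dptRed K N (u, z)).2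
        (dptRed K N (u + 1, z)).1 (dptRed K N (u + 1, z)).2
        (-(z / N)) (-(z / N)) (by simpa using hP) (by simpa using hQ)
      have hlt2 := happ.1 ⟨by rw [hcoP.1, hcoQ.1]; ring, by rw [hcoP.2, hcoQ.2]⟩
      simpa using add_lt_add_right hlt2 (t * m)
    · -- different windows: bound
      have h1 := (hEbd x y).2
      have h2 := (hEbd (x + 1) y).1
      rw [← ht] at h1
      rw [← ht'] at h2
      nlinarith
  -- strict increase in y
  have hy : ∀ x y : ℤ, E (x, y) < E (x, y + 1) := by
    intro x y
    set t := T x y with ht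
    set t' := T x (y + 1) with ht'
    have hp := (aux_memS x y t).1 (hT1 x y)
    have hq := (aux_memS x (y + 1) t').1 (hT1 x (y + 1))
    have hSm := aux_S_mono hle y
    have htt' : t ≤ t' := by
      by_contra hc
      push_neg at hc
      have h1 : t' + 1 ≤ t := by omega
      have h2 := hSm h1
      dsimp only at h2
      have h3 : L (y + 1 + (t' + 1) * b) ≤ L (y + (t' + 1) * b) :=
        hL.1 (by omega : y + (t' + 1) * b ≤ y + 1 + (t' + 1) * b)
      omega
    rcases eq_or_lt_of_le htt' with heq | hlt
    · rw [hEval, hEval, ← ht, ← ht', ← heq]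
      have hP := hTmem x y
      have hQ : dptRed K N (x - t * a, y + 1 + t * b) ∈ Delta N a b L := by
        have := hTmem x (y + 1)
        rw [← ht', ← heq] at this
        exact this
      rw [← ht] at hP
      set u := x - t * a with hu
      set z := y + t * b with hz
      have e1 : y + 1 + t * b = z + 1 := by rw [hz]; ring
      rw [e1] at hQ ⊢
      have hcoP := dptRed_coords (K := K) (N := N) u z
      have hcoQ := dptRed_coords (K := K) (N := N) u (z + 1)
      have happ := hExt (dptRed K N (u, z)).1 (dptRed K N (u, z)).2
        (dptRed K N (u, z + 1)).1 (dptRed K N (u, z + 1)).2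
        (-(z / N)) (-((z + 1) / N)) (by simpa using hP) (by simpa using hQ)
      have hlt2 := happ.2 ⟨by rw [hcoP.1, hcoQ.1]; ring, by rw [hcoP.2, hcoQ.2]; ring⟩
      simpa using add_lt_add_right hlt2 (t * m)
    · have h1 := (hEbd x y).2
      have h2 := (hEbd x (y + 1)).1
      rw [← ht] at h1
      rw [← ht'] at h2
      nlinarith
  -- surjectivity
  have hsurj : Function.Surjective E := by
    intro v
    have hq0 : 1 ≤ (v - 1) % m + 1 ∧ (v - 1) % m + 1 ≤ m := by
      have h1 := Int.emod_nonneg (v - 1) (by omega : m ≠ 0)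
      have h2 := Int.emod_lt_of_pos (v - 1) hm
      omega
    obtain ⟨p, hp, hpv⟩ := hτstd.1.2.2 (by simpa using hq0 : ((v - 1) % m + 1 : ℤ) ∈ Set.Icc 1 m)
    have hiter := aux_iter (σ := E) (u := a) (v := b) (c := m)
      (fun x y => per2 x y) ((v - 1) / m) p.1 p.2
    refine ⟨(p.1 + (v - 1) / m * a, p.2 - (v - 1) / m * b), ?_⟩
    rw [hiter]
    have : E (p.1, p.2) = τ p := by
      have := hEdelta p hp
      rw [← this]
    rw [this, hpv]
    have h := Int.mul_ediv_add_emod (v - 1) m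
    have h2 : (v - 1) / m * m = m * ((v - 1) / m) := mul_comm _ _
    omega
  -- least
  have hT0 : ∀ x y : ℤ, L y ≤ x ↔ 0 ≤ T x y := by
    intro x y
    have hp := (aux_memS x y (T x y)).1 (hT1 x y)
    have hSm := aux_S_mono hle y
    constructor
    · intro hx0
      by_contra hc
      push_neg at hc
      have h1 : T x y + 1 ≤ 0 := by omega
      have h2 := hSm h1
      dsimp only at h2
      simp only [zero_mul, add_zero] at h2
      omega
    · intro h0
      have h2 := hSm h0
      dsimp only at h2
      simp only [zero_mul, add_zero] at h2
      omega
  have hleast : ∀ y : ℤ, IsLeast {x : ℤ | 1 ≤ E (x, y)} (L y) := by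
    intro y
    have hpos : ∀ x : ℤ, 1 ≤ E (x, y) ↔ 0 ≤ T x y := by
      intro x
      have h1 := hEbd x y
      constructor
      · intro hx0
        by_contra hc
        push_neg at hc
        have h2 : T x y ≤ -1 := by omega
        nlinarith [h1.2]
      · intro h0
        nlinarith [h1.1]
    constructor
    · show 1 ≤ E (L y, y)
      rw [hpos]
      rw [← hT0]
    · intro x hx
      simp only [Set.mem_setOf_eq] at hx
      rw [hpos] at hx
      exact (hT0 x y).2 hx
  exact ⟨⟨hsurj, per1, per2, hx, hy⟩, hleast, hEdelta⟩

/-- For a fixed `(K,N)`-periodic lattice path `L` with `L < L[a,b]`, restriction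
to `Δ(L)` is a bijection from `DPT(L) = {σ ∈ DPT(K,N,a,b) : 𝓛(σ) = L}` onto the
set of standard fillings of `Δ(L)` by `1,…,m` whose periodic extension to `Δ'(L)`
is standard (fillings normalized to be `0` outside `Δ(L)`). -/
theorem dpt_fixed_path_bijection (K N a b : ℤ) (hm : 0 < a * N - b * K)
    (L : ℤ → ℤ) (hL : IsLP K N L)
    (hle : ∀ y : ℤ, L y ≤ LPshift a b L y) (hne : L ≠ LPshift a b L) :
    ∃ F : {σ : ℤ × ℤ → ℤ // IsDPT K N a b σ ∧
            ∀ y : ℤ, IsLeast {x : ℤ | 1 ≤ σ (x, y)} (L y)} ≃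
          {τ : ℤ × ℤ → ℤ // IsStdFilling K N a b L τ ∧
            ExtStandard K N (Delta N a b L) τ ∧
            ∀ p : ℤ × ℤ, p ∉ Delta N a b L → τ p = 0},
      ∀ σ, ∀ p ∈ Delta N a b L, (F σ).1 p = σ.1 p := by
  classical
  have hle' : ∀ y : ℤ, L y ≤ L (y + b) + a := fun y => hle y
  have hN : 0 < N := aux_Npos hm hL hle'
  set m := a * N - b * K with hmdef
  have hwin : ∀ x y : ℤ, ∃! t : ℤ, (x - t * a, y + t * b) ∈ DeltaP a b L :=
    fun x y => aux_window hm hL.1 hL.2 hle' x y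
  set T : ℤ → ℤ → ℤ := fun x y => (hwin x y).choose with hT
  have hT1 : ∀ x y : ℤ, (x - T x y * a, y + T x y * b) ∈ DeltaP a b L :=
    fun x y => (hwin x y).choose_spec.1
  have hT2 : ∀ x y t : ℤ, (x - t * a, y + t * b) ∈ DeltaP a b L → t = T x y :=
    fun x y t h => (hwin x y).choose_spec.2 t h
  refine ⟨{
    toFun := fun σ => ⟨restrDelta N a b L σ.1, aux_forward hm hL hle' σ.2.1 σ.2.2⟩
    invFun := fun τ => ⟨fun p => τ.1 (dptRed K N (p.1 - T p.1 p.2 * a, p.2 + T p.1 p.2 * b))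
        + T p.1 p.2 * m,
      (aux_backward hm hL hle' τ.2.1 τ.2.2.1 T hT1 hT2).1,
      (aux_backward hm hL hle' τ.2.1 τ.2.2.1 T hT1 hT2).2.1⟩
    left_inv := ?_
    right_inv := ?_ }, ?_⟩
  · rintro ⟨σ, hσ, hleast⟩
    apply Subtype.ext
    funext p
    obtain ⟨x, y⟩ := p
    dsimp only
    set t := T x y with ht
    have hq := hT1 x y
    have hr := dptRed_mem hN hL.2 hq
    rw [restrDelta_eq hr]
    set u := x - t * a with hu
    set z := y + t * b with hz
    have e2 : dptRed K N (u, z) = (u + z / N * K, z - z / N * N) := by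
      rw [Prod.mk.injEq]
      exact ⟨(dptRed_coords u z).1, (dptRed_coords u z).2⟩
    rw [e2, aux_per1_iter hσ (z / N) u z]
    have e3 : σ (u, z) = σ (x, y) + (-t) * m := by
      have := aux_per2_iter hσ (-t) x y
      rw [show x + -t * a = u by rw [hu]; ring, show y - -t * b = z by rw [hz]; ring] at this
      exact this
    rw [e3]
    ring
  · rintro ⟨τ, hτstd, hExt, hτ0⟩
    apply Subtype.ext
    funext p
    dsimp only
    by_cases hp : p ∈ Delta N a b L
    · rw [restrDelta_eq hp]
      exact (aux_backward hm hL hle' hτstd hExt T hT1 hT2).2.2 p hp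
    · rw [restrDelta_zero hp, hτ0 p hp]
  · rintro ⟨σ, hσ⟩ p hp
    exact restrDelta_eq hp
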